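/- For every n ≥ 2, the Hirzebruch–Jung continued fraction [3^{n-1}, 5, 3^{n-2}, 2] (meaning n−1 threes, then 5, then n−2 threes, then 2) equals F(2n+1)²/(F(2n+1)·F(2n-1) − 1), where F denotes the odd-indexed Fibonacci numbers. -/
import Mathlib


/-- `oddFib n = F(2n+1)`, the odd-indexed Fibonacci numbers:
`F(1) = 1`, `F(3) = 2`, `F(2n+3) = 3·F(2n+1) − F(2n-1)`. -/
def oddFib : ℕ → ℤ
  | 0 => 1
  | 1 => 2
  | n + 2 => 3 * oddFib (n + 1) - oddFib n

/-- Hirzebruch–Jung continued fraction `[a1,...,ak] = a1 - 1/(a2 - 1/(... - 1/ak))`. -/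
def hj : List ℚ → ℚ
  | [] => 0
  | a :: l => a - 1 / hj l

lemma oddFib_succ_succ (k : ℕ) : oddFib (k + 2) = 3 * oddFib (k + 1) - oddFib k := rfl

lemma oddFib_key (m : ℕ) : 0 < oddFib m ∧ oddFib m < oddFib (m + 1) := by
  induction m with
  | zero => norm_num [oddFib]
  | succ k ih =>
    have h := oddFib_succ_succ k
    exact ⟨by linarith [ih.1, ih.2], by rw [h]; linarith [ih.1, ih.2]⟩

lemma oddFib_id (m : ℕ) :
    oddFib (m + 1) ^ 2 + oddFib m ^ 2 - 3 * oddFib (m + 1) * oddFib m = -1 := by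
  induction m with
  | zero => norm_num [oddFib]
  | succ k ih =>
    rw [oddFib_succ_succ k]
    linear_combination ih

lemma hj_tail (m : ℕ) :
    hj (List.replicate m 3 ++ [2]) = (oddFib (m + 1) : ℚ) / (oddFib m : ℚ) := by
  induction m with
  | zero => norm_num [hj, oddFib]
  | succ k ih =>
    have h1 : (0 : ℤ) < oddFib k := (oddFib_key k).1
    have h2 : (0 : ℤ) < oddFib (k + 1) := (oddFib_key (k + 1)).1
    have hA : (oddFib (k + 1) : ℚ) ≠ 0 := by exact_mod_cast h2.ne'
    have hB : (oddFib k : ℚ) ≠ 0 := by exact_mod_cast h1.ne'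
    rw [List.replicate_succ, List.cons_append,
      show hj (3 :: (List.replicate k 3 ++ [2])) =
        3 - 1 / hj (List.replicate k 3 ++ [2]) from rfl, ih,
      oddFib_succ_succ k]
    push_cast
    field_simp

/-- auxiliary sequence -/
def g (m k : ℕ) : ℤ :=
  oddFib (m + 2) * oddFib (k + 1) + (oddFib (m + 1) - 2 * oddFib (m + 2)) * oddFib k

lemma g_rec (m k : ℕ) : g m (k + 2) = 3 * g m (k + 1) - g m k := by
  unfold g
  rw [show oddFib (k + 2 + 1) = 3 * oddFib (k + 2) - oddFib (k + 1) from rfl,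
    oddFib_succ_succ k]
  ring

lemma g_key (m : ℕ) : ∀ k, 0 < g m k ∧ g m k < g m (k + 1) := by
  intro k
  induction k with
  | zero =>
    have h1 := (oddFib_key m).1
    have h2 := (oddFib_key (m + 1)).1
    have h3 := (oddFib_key (m + 1)).2
    have e0 : g m 0 = oddFib (m + 1) := by
      unfold g; rw [show oddFib 1 = 2 from rfl, show oddFib 0 = 1 from rfl]; ring
    have e1 : g m 1 = oddFib (m + 2) + 2 * oddFib (m + 1) := by
      unfold g; rw [show (oddFib 2 : ℤ) = 5 from rfl, show oddFib 1 = 2 from rfl]; ring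
    rw [e0, e1]
    constructor <;> linarith
  | succ k ih =>
    rw [g_rec]
    exact ⟨by linarith [ih.1, ih.2], by linarith [ih.1, ih.2]⟩

lemma hj_main (m : ℕ) : ∀ k,
    hj (List.replicate k 3 ++ ([5] ++ (List.replicate m 3 ++ [2]))) =
      (g m (k + 1) : ℚ) / (g m k : ℚ) := by
  intro k
  induction k with
  | zero =>
    have h1 : (0 : ℤ) < oddFib m := (oddFib_key m).1
    have h2 : (0 : ℤ) < oddFib (m + 1) := (oddFib_key (m + 1)).1
    have hA : (oddFib (m + 1) : ℚ) ≠ 0 := by exact_mod_cast h2.ne'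
    have e0 : g m 0 = oddFib (m + 1) := by
      unfold g; rw [show oddFib 1 = 2 from rfl, show oddFib 0 = 1 from rfl]; ring
    have e1 : g m 1 = oddFib (m + 2) + 2 * oddFib (m + 1) := by
      unfold g; rw [show (oddFib 2 : ℤ) = 5 from rfl, show oddFib 1 = 2 from rfl]; ring
    rw [List.replicate, List.nil_append,
      show hj ([5] ++ (List.replicate m 3 ++ [2])) =
        5 - 1 / hj (List.replicate m 3 ++ [2]) from rfl,
      hj_tail m, e0, e1, oddFib_succ_succ m]
    push_cast
    field_simp
    all_goals ring
  | succ k ih =>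
    have h1 : (0 : ℤ) < g m k := (g_key m k).1
    have h2 : (0 : ℤ) < g m (k + 1) := (g_key m (k + 1)).1
    have hA : ((g m (k + 1) : ℤ) : ℚ) ≠ 0 := by exact_mod_cast h2.ne'
    have hB : ((g m k : ℤ) : ℚ) ≠ 0 := by exact_mod_cast h1.ne'
    rw [List.replicate_succ, List.cons_append,
      show hj (3 :: (List.replicate k 3 ++ ([5] ++ (List.replicate m 3 ++ [2])))) =
        3 - 1 / hj (List.replicate k 3 ++ ([5] ++ (List.replicate m 3 ++ [2]))) from rfl,
      ih, g_rec]
    push_cast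
    field_simp

theorem hj_oddFib_sq (n : ℕ) (hn : 2 ≤ n) :
    hj (List.replicate (n - 1) 3 ++ [5] ++ List.replicate (n - 2) 3 ++ [2]) =
      ((oddFib n : ℚ) ^ 2) / ((oddFib n : ℚ) * (oddFib (n - 1) : ℚ) - 1) := by
  obtain ⟨m, rfl⟩ : ∃ m, n = m + 2 := ⟨n - 2, by omega⟩
  have hn1 : m + 2 - 1 = m + 1 := by omega
  have hn2 : m + 2 - 2 = m := by omega
  rw [hn1, hn2]
  rw [List.append_assoc, List.append_assoc, hj_main m (m + 1)]
  have e2 : g m (m + 2) = oddFib (m + 2) ^ 2 := by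
    unfold g
    rw [show oddFib (m + 2 + 1) = 3 * oddFib (m + 2) - oddFib (m + 1) from rfl]
    ring
  have e1 : g m (m + 1) = oddFib (m + 2) * oddFib (m + 1) - 1 := by
    unfold g
    linear_combination oddFib_id (m + 1)
  rw [e2, e1]
  push_cast
  ring
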